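/- The partial order P1 has precaliber ω2: for every family (f_α)_{α<ω2} of elements of P1 there is a set S ⊆ ω2 of cardinality ℵ2 such that the family (f_α)_{α∈S} is centered, i.e., every finite subfamily has a common lower bound in P1. -/

import Mathlib

open Cardinal

/-- There is no cardinal strictly between `ℵ₁` and `ℵ₂`. -/
lemma aux_le_aleph_one {c : Cardinal} (h : c ≤ Cardinal.aleph 2) (h2 : c ≠ Cardinal.aleph 2) :
    c ≤ Cardinal.aleph 1 := by
  have h21 : (2 : Ordinal) = Order.succ 1 := by simp; exact one_add_one_eq_two.symm
  rw [h21, Cardinal.aleph_succ] at h h2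
  exact Order.lt_succ_iff.mp (lt_of_le_of_ne h h2)

/-- Pigeonhole: a set of size `ℵ₂` mapped into a type of size `≤ ℵ₁` has a fiber of size `ℵ₂`. -/
lemma aux_pigeon {α : Type u} {ι : Type v} (k : α → ι) (t : Set α)
    (ht : #t = Cardinal.aleph 2) (hι : #ι ≤ Cardinal.aleph 1) :
    ∃ i : ι, #({a ∈ t | k a = i} : Set α) = Cardinal.aleph 2 := by
  by_contra hc
  push_neg at hc
  have hfib : ∀ i, #({a ∈ t | k a = i} : Set α) ≤ Cardinal.aleph 1 := fun i =>
    aux_le_aleph_one ((Cardinal.mk_le_mk_of_subset (fun a ha => ha.1)).trans ht.le) (hc i)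
  have hsub : t ⊆ ⋃ i, {a ∈ t | k a = i} := fun a ha => Set.mem_iUnion.mpr ⟨k a, ha, rfl⟩
  have h2 := Cardinal.mk_iUnion_le_lift (fun i : ι => ({a ∈ t | k a = i} : Set α))
  have h3 : (⨆ i, Cardinal.lift.{v} #({a ∈ t | k a = i} : Set α)) ≤
      Cardinal.lift.{v} (Cardinal.aleph 1) :=
    ciSup_le' fun i => Cardinal.lift_le.mpr (hfib i)
  have h4 : Cardinal.lift.{v} #t ≤
      Cardinal.lift.{u} (Cardinal.aleph 1) * Cardinal.lift.{v} (Cardinal.aleph 1) := by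
    refine le_trans (Cardinal.lift_le.mpr (Cardinal.mk_le_mk_of_subset hsub)) (h2.trans ?_)
    exact mul_le_mul' (Cardinal.lift_le.mpr hι) h3
  rw [ht] at h4
  simp only [Cardinal.lift_aleph, Ordinal.lift_one, Ordinal.lift_ofNat,
    Cardinal.mul_eq_self (Cardinal.aleph0_le_aleph 1)] at h4
  exact absurd h4 (not_le.mpr (Cardinal.aleph_lt_aleph.mpr one_lt_two))

/-- The Δ-system lemma for `ℵ₂`-many finite sets. -/
lemma aux_delta {ι : Type u} {O : Type v} [DecidableEq O] :
    ∀ (n : ℕ) (S : Set ι) (A : ι → Finset O), #S = Cardinal.aleph 2 →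
      (∀ α ∈ S, (A α).card = n) →
      ∃ (R : Finset O) (S' : Set ι), S' ⊆ S ∧ #S' = Cardinal.aleph 2 ∧
        ∀ α ∈ S', ∀ β ∈ S', α ≠ β → A α ∩ A β = R := by
  intro n
  induction n with
  | zero =>
    intro S A hS hcard
    refine ⟨∅, S, subset_rfl, hS, fun α hα β hβ _ => ?_⟩
    rw [Finset.card_eq_zero.mp (hcard α hα), Finset.empty_inter]
  | succ n ih =>
    intro S A hS hcard
    by_cases hb : ∃ b, #({α ∈ S | b ∈ A α} : Set ι) = Cardinal.aleph 2
    · obtain ⟨b, hb⟩ := hb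
      obtain ⟨R', S', hS'sub, hS'card, hR'⟩ := ih {α ∈ S | b ∈ A α}
        (fun α => (A α).erase b) hb
        (fun α hα => by
          rw [Finset.card_erase_of_mem hα.2, hcard α hα.1]; rfl)
      refine ⟨insert b R', S', fun a ha => (hS'sub ha).1, hS'card, ?_⟩
      intro α hα β hβ hne
      have hbα : b ∈ A α := (hS'sub hα).2
      have hbβ : b ∈ A β := (hS'sub hβ).2
      have hkey := hR' α hα β hβ hne
      ext x
      by_cases hx : x = b
      · subst hx; simp [hbα, hbβ]
      · have h1 : x ∈ (A α).erase b ∩ (A β).erase b ↔ x ∈ R' := by rw [hkey]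
        simp only [Finset.mem_inter, Finset.mem_erase, Finset.mem_insert, hx,
          false_or, ne_eq, not_false_eq_true, true_and] at h1 ⊢
        exact h1
    · push_neg at hb
      have hfib : ∀ b, #({α ∈ S | b ∈ A α} : Set ι) ≤ Cardinal.aleph 1 := fun b =>
        aux_le_aleph_one ((Cardinal.mk_le_mk_of_subset fun a ha => ha.1).trans hS.le) (hb b)
      set Z : Set (Set ι) :=
        {T | T ⊆ S ∧ ∀ α ∈ T, ∀ β ∈ T, α ≠ β → Disjoint (A α) (A β)} with hZ
      obtain ⟨m, -, hm⟩ := zorn_subset_nonempty Z (fun c hcZ hchain _ => by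
        refine ⟨⋃₀ c, ⟨Set.sUnion_subset fun t ht => (hcZ ht).1, ?_⟩,
          fun s hs => Set.subset_sUnion_of_mem hs⟩
        intro α hα β hβ hne
        obtain ⟨t₁, ht₁, hαt⟩ := hα
        obtain ⟨t₂, ht₂, hβt⟩ := hβ
        rcases hchain.total ht₁ ht₂ with h | h
        · exact (hcZ ht₂).2 α (h hαt) β hβt hne
        · exact (hcZ ht₁).2 α hαt β (h hβt) hne) ∅
        ⟨Set.empty_subset S, fun α hα => absurd hα (Set.notMem_empty α)⟩
      have hmZ : m ∈ Z := hm.1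
      have hmS : m ⊆ S := hmZ.1
      have hmcard : #m = Cardinal.aleph 2 := by
        by_contra hne
        have hm1 : #m ≤ Cardinal.aleph 1 :=
          aux_le_aleph_one ((Cardinal.mk_le_mk_of_subset hmS).trans hS.le) hne
        set B : Set ι := m ∪ ⋃ (β : m), ⋃ (b : (A β.1 : Finset O)),
          {α ∈ S | b.1 ∈ A α} with hBdef
        have hBcard : #B ≤ Cardinal.aleph 1 := by
          have hinner : ∀ β : m,
              #(⋃ (b : (A β.1 : Finset O)), ({α ∈ S | b.1 ∈ A α} : Set ι)) ≤
                Cardinal.aleph 1 := by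
            intro β
            refine Cardinal.lift_le.{v}.mp ?_
            refine (Cardinal.mk_iUnion_le_lift _).trans ?_
            have h1 : Cardinal.lift.{u} #(A β.1 : Finset O) ≤
                Cardinal.lift.{v} (Cardinal.aleph 1) := by
              rw [Cardinal.mk_coe_finset, Cardinal.lift_natCast, Cardinal.lift_aleph,
                Ordinal.lift_one]
              exact ((Cardinal.nat_lt_aleph0 _).le).trans (Cardinal.aleph0_le_aleph 1)
            have h2 : (⨆ (b : (A β.1 : Finset O)),
                Cardinal.lift.{v} #({α ∈ S | b.1 ∈ A α} : Set ι)) ≤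
                Cardinal.lift.{v} (Cardinal.aleph 1) :=
              ciSup_le' fun b => Cardinal.lift_le.mpr (hfib b.1)
            refine (mul_le_mul' h1 h2).trans ?_
            rw [Cardinal.lift_aleph, Ordinal.lift_one,
              Cardinal.mul_eq_self (Cardinal.aleph0_le_aleph 1)]
          have houter : #(⋃ (β : m), ⋃ (b : (A β.1 : Finset O)),
              ({α ∈ S | b.1 ∈ A α} : Set ι)) ≤ Cardinal.aleph 1 := by
            refine (Cardinal.mk_iUnion_le _).trans ?_
            calc #m * ⨆ (β : m), #(⋃ (b : (A β.1 : Finset O)), ({α ∈ S | b.1 ∈ A α} : Set ι))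
                ≤ Cardinal.aleph 1 * Cardinal.aleph 1 :=
                  mul_le_mul' hm1 (ciSup_le' hinner)
              _ = Cardinal.aleph 1 := Cardinal.mul_eq_self (Cardinal.aleph0_le_aleph 1)
          calc #B ≤ #m + #(⋃ (β : m), ⋃ (b : (A β.1 : Finset O)),
                ({α ∈ S | b.1 ∈ A α} : Set ι)) := Cardinal.mk_union_le _ _
            _ ≤ Cardinal.aleph 1 + Cardinal.aleph 1 := add_le_add hm1 houter
            _ = Cardinal.aleph 1 := Cardinal.add_eq_self (Cardinal.aleph0_le_aleph 1)
        have hBS : ¬ (S ⊆ B) := by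
          intro h
          have := (Cardinal.mk_le_mk_of_subset h).trans hBcard
          rw [hS] at this
          exact absurd this (not_le.mpr (Cardinal.aleph_lt_aleph.mpr one_lt_two))
        obtain ⟨α, hαS, hαB⟩ := Set.not_subset.mp hBS
        have hαm : α ∉ m := fun h => hαB (Or.inl h)
        have hdisj : ∀ δ ∈ m, Disjoint (A α) (A δ) := by
          intro δ hδ
          by_contra hnd
          obtain ⟨b, hbα, hbδ⟩ := Finset.not_disjoint_iff.mp hnd
          exact hαB (Or.inr (Set.mem_iUnion.mpr ⟨⟨δ, hδ⟩,
            Set.mem_iUnion.mpr ⟨⟨b, hbδ⟩, ⟨hαS, hbα⟩⟩⟩))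
        have hnew : insert α m ∈ Z := by
          constructor
          · exact Set.insert_subset hαS hmS
          · intro γ hγ δ hδ hne
            rcases hγ with hγ | hγ <;> rcases hδ with hδ | hδ
            · exact absurd (hγ.trans hδ.symm) hne
            · exact hγ ▸ hdisj δ hδ
            · exact (hδ ▸ hdisj γ hγ).symm
            · exact hmZ.2 γ hγ δ hδ hne
        have : insert α m ⊆ m := hm.2 hnew (Set.subset_insert _ _)
        exact hαm (this (Set.mem_insert _ _))
      refine ⟨∅, m, hmS, hmcard, fun α hα β hβ hne => ?_⟩
      exact Finset.disjoint_iff_inter_eq_empty.mp (hmZ.2 α hα β hβ hne)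

/-- A condition in the partial order `P1`: a function with finite domain `dom ⊆ ω₂` such that
`val ξ` is a finite subset of `Y ξ` for every `ξ ∈ dom` (values outside `dom` are irrelevant). -/
structure P1Cond (O1 O2 : Type*) (Y : O2 → Set O1) where
  dom : Finset O2
  val : O2 → Finset O1
  val_subset : ∀ ξ ∈ dom, ↑(val ξ) ⊆ Y ξ

/-- The order on `P1`: `f ≤ g` iff `dom g ⊆ dom f`, `g ξ ⊆ f ξ` for `ξ ∈ dom g`, and
`f ξ ∩ f η = g ξ ∩ g η` for all distinct `ξ, η ∈ dom g`. -/
def P1Le {O1 O2 : Type*} {Y : O2 → Set O1} (f g : P1Cond O1 O2 Y) : Prop :=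
  g.dom ⊆ f.dom ∧ (∀ ξ ∈ g.dom, g.val ξ ⊆ f.val ξ) ∧
    ∀ ξ ∈ g.dom, ∀ η ∈ g.dom, ξ ≠ η →
      (↑(f.val ξ) ∩ ↑(f.val η) : Set O1) = (↑(g.val ξ) ∩ ↑(g.val η) : Set O1)

/-- `P1` has precaliber `ω₂`: every family of conditions indexed by `ω₂` has a subfamily indexed
by a set of cardinality `ℵ₂` which is centered, i.e., every finite subfamily has a common lower
bound in `P1`. -/
theorem stmt7
    (Y : (Cardinal.aleph 2).ord.ToType → Set (Cardinal.aleph 1).ord.ToType)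
    (hYunc : ∀ ξ, ¬ (Y ξ).Countable)
    (hYcap : ∀ ξ η, ξ ≠ η → (Y ξ ∩ Y η).Countable)
    (f : (Cardinal.aleph 2).ord.ToType →
      P1Cond (Cardinal.aleph 1).ord.ToType (Cardinal.aleph 2).ord.ToType Y) :
    ∃ S : Set (Cardinal.aleph 2).ord.ToType, #S = Cardinal.aleph 2 ∧
      ∀ F : Finset (Cardinal.aleph 2).ord.ToType, ↑F ⊆ S →
        ∃ h, ∀ α ∈ F, P1Le h (f α) := by
  classical
  obtain ⟨A, hA⟩ : ∃ A, ∀ α, A α = (f α).dom := ⟨fun α => (f α).dom, fun _ => rfl⟩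
  -- Step 1: constant size of domains
  obtain ⟨n, hn⟩ := aux_pigeon (fun α => (A α).card) Set.univ
    (by rw [Cardinal.mk_univ, Cardinal.mk_ord_toType])
    (by rw [Cardinal.mk_nat]; exact Cardinal.aleph0_le_aleph 1)
  -- Step 2: Δ-system
  obtain ⟨R, S₁, hS₁sub, hS₁card, hΔ'⟩ :=
    aux_delta n _ A hn (fun α hα => hα.2)
  have hΔ : ∀ α ∈ S₁, ∀ β ∈ S₁, α ≠ β → (f α).dom ∩ (f β).dom = R := by
    intro α hα β hβ hne
    rw [← hA, ← hA]
    exact hΔ' α hα β hβ hne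
  -- Step 3: constant values on the root
  obtain ⟨k, hk⟩ : ∃ k, ∀ α (ξ : ↥R), k α ξ = (f α).val ξ.1 :=
    ⟨fun α (ξ : ↥R) => (f α).val ξ.1, fun _ _ => rfl⟩
  have hfun : #(∀ _ : ↥R, Finset ((Cardinal.aleph 1).ord.ToType)) ≤ Cardinal.aleph 1 := by
    have hInf : Infinite ((Cardinal.aleph 1).ord.ToType) := by
      rw [Cardinal.infinite_iff, Cardinal.mk_ord_toType]
      exact Cardinal.aleph0_le_aleph 1
    rw [Cardinal.mk_arrow]
    have h1 : Cardinal.lift #(Finset ((Cardinal.aleph 1).ord.ToType)) = Cardinal.aleph 1 := by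
      rw [Cardinal.mk_finset_of_infinite, Cardinal.mk_ord_toType, Cardinal.lift_aleph,
        Ordinal.lift_one]
    have h2 : Cardinal.lift #(↥R) = (R.card : Cardinal) := by
      rw [Cardinal.mk_coe_finset, Cardinal.lift_natCast]
    rw [h1, h2]
    exact Cardinal.power_nat_le (Cardinal.aleph0_le_aleph 1)
  obtain ⟨v, hv⟩ := aux_pigeon k S₁ hS₁card hfun
  refine ⟨{a ∈ S₁ | k a = v}, hv, ?_⟩
  intro F hF
  -- values agree on common domain points
  have hvaleq : ∀ α ∈ F, ∀ β ∈ F, ∀ ξ, ξ ∈ (f α).dom → ξ ∈ (f β).dom →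
      (f α).val ξ = (f β).val ξ := by
    intro α hα β hβ ξ hξα hξβ
    by_cases hab : α = β
    · subst hab; rfl
    · have hαS := hF hα
      have hβS := hF hβ
      have hRmem : ξ ∈ R := by
        have h := hΔ α hαS.1 β hβS.1 hab
        rw [← h]; exact Finset.mem_inter.mpr ⟨hξα, hξβ⟩
      have e1 := congrFun hαS.2 ⟨ξ, hRmem⟩
      have e2 := congrFun hβS.2 ⟨ξ, hRmem⟩
      rw [hk] at e1 e2
      exact e1.trans e2.symm
  obtain ⟨hc, hcdom, hcval⟩ :
      ∃ hc : P1Cond ((Cardinal.aleph 1).ord.ToType) ((Cardinal.aleph 2).ord.ToType) Y,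
        hc.dom = F.biUnion (fun α => (f α).dom) ∧
        hc.val = fun ξ => (F.filter (fun α => ξ ∈ (f α).dom)).biUnion (fun α => (f α).val ξ) := by
    refine ⟨⟨F.biUnion (fun α => (f α).dom),
      fun ξ => (F.filter (fun α => ξ ∈ (f α).dom)).biUnion (fun α => (f α).val ξ), ?_⟩, rfl, rfl⟩
    intro ξ hξ x hx
    rw [Finset.mem_coe, Finset.mem_biUnion] at hx
    obtain ⟨β, hβ, hxβ⟩ := hx
    rw [Finset.mem_filter] at hβ
    exact (f β).val_subset ξ hβ.2 hxβ
  have hval : ∀ α ∈ F, ∀ ξ ∈ (f α).dom, hc.val ξ = (f α).val ξ := by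
    intro α hα ξ hξ
    rw [hcval]
    apply Finset.Subset.antisymm
    · intro x hx
      rw [Finset.mem_biUnion] at hx
      obtain ⟨β, hβ, hxβ⟩ := hx
      rw [Finset.mem_filter] at hβ
      rwa [hvaleq β hβ.1 α hα ξ hβ.2 hξ] at hxβ
    · exact Finset.subset_biUnion_of_mem (fun β => (f β).val ξ)
        ((Finset.mem_filter (p := fun β => ξ ∈ (f β).dom)).mpr ⟨hα, hξ⟩)
  refine ⟨hc, ?_⟩
  intro α hα
  refine ⟨?_, ?_, ?_⟩
  · rw [hcdom]
    exact Finset.subset_biUnion_of_mem (fun β => (f β).dom) hα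
  · intro ξ hξ
    rw [hval α hα ξ hξ]
  · intro ξ hξ η hη _
    rw [hval α hα ξ hξ, hval α hα η hη]
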